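/- Evaluation commutes with reduction: if R_A →* S_A (as memories), M →* N, and (R_A, M) ⇓ (T_A, i), then there exists a memory U_A such that T_A →* U_A and (S_A, N) ⇓ (U_A, i). -/

import Mathlib

variable {Loc Ch : Type}

/-- FMC terms: variable, push `[N]a.M`, pop `a<x>.M` (de Bruijn binder),
choice `i`, case `M ; i -> N`, and loop `M^i`. -/
inductive Tm (Loc Ch : Type) : Type where
  | var : ℕ → Tm Loc Ch
  | push : Tm Loc Ch → Loc → Tm Loc Ch → Tm Loc Ch
  | pop : Loc → Tm Loc Ch → Tm Loc Ch
  | choice : Ch → Tm Loc Ch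
  | caseOf : Tm Loc Ch → Ch → Tm Loc Ch → Tm Loc Ch
  | loop : Tm Loc Ch → Ch → Tm Loc Ch

namespace Tm

/-- Shift the free de Bruijn indices `≥ d` up by one. -/
def lift : Tm Loc Ch → ℕ → Tm Loc Ch
  | var n, d => if n < d then var n else var (n + 1)
  | push N a M, d => push (N.lift d) a (M.lift d)
  | pop a M, d => pop a (M.lift (d + 1))
  | choice i, _ => choice i
  | caseOf M i N, d => caseOf (M.lift d) i (N.lift d)
  | loop M i, d => loop (M.lift d) i

/-- Capture-avoiding substitution `{N/k}M` for the de Bruijn index `k`. -/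
def subst : Tm Loc Ch → ℕ → Tm Loc Ch → Tm Loc Ch
  | var n, k, N => if n = k then N else if n < k then var n else var (n - 1)
  | push P a M, k, N => push (P.subst k N) a (M.subst k N)
  | pop a M, k, N => pop a (M.subst (k + 1) (N.lift 0))
  | choice i, _, _ => choice i
  | caseOf M i P, k, N => caseOf (M.subst k N) i (P.subst k N)
  | loop M i, k, N => loop (M.subst k N) i

end Tm

/-- Reduction: the closure under arbitrary contexts of the rules
beta, passage, select, reject, prefix(pop), prefix(push), associate, unroll. -/
inductive Step : Tm Loc Ch → Tm Loc Ch → Prop where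
  | beta (N : Tm Loc Ch) (a : Loc) (M : Tm Loc Ch) :
      Step (.push N a (.pop a M)) (M.subst 0 N)
  | passage (N : Tm Loc Ch) (a b : Loc) (M : Tm Loc Ch) (h : a ≠ b) :
      Step (.push N b (.pop a M)) (.pop a (.push (N.lift 0) b M))
  | select (i : Ch) (M : Tm Loc Ch) :
      Step (.caseOf (.choice i) i M) M
  | reject (i j : Ch) (M : Tm Loc Ch) (h : i ≠ j) :
      Step (.caseOf (.choice i) j M) (.choice i)
  | prefixPop (a : Loc) (N : Tm Loc Ch) (i : Ch) (M : Tm Loc Ch) :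
      Step (.caseOf (.pop a N) i M) (.pop a (.caseOf N i (M.lift 0)))
  | prefixPush (P : Tm Loc Ch) (a : Loc) (N : Tm Loc Ch) (i : Ch) (M : Tm Loc Ch) :
      Step (.caseOf (.push P a N) i M) (.push P a (.caseOf N i M))
  | assoc (P : Tm Loc Ch) (i : Ch) (N M : Tm Loc Ch) :
      Step (.caseOf (.caseOf P i N) i M) (.caseOf P i (.caseOf N i M))
  | unroll (M : Tm Loc Ch) (i : Ch) :
      Step (.loop M i) (.caseOf M i (.loop M i))
  | push_left (N N' : Tm Loc Ch) (a : Loc) (M : Tm Loc Ch) :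
      Step N N' → Step (.push N a M) (.push N' a M)
  | push_right (N : Tm Loc Ch) (a : Loc) (M M' : Tm Loc Ch) :
      Step M M' → Step (.push N a M) (.push N a M')
  | pop_body (a : Loc) (M M' : Tm Loc Ch) :
      Step M M' → Step (.pop a M) (.pop a M')
  | case_left (M M' : Tm Loc Ch) (i : Ch) (N : Tm Loc Ch) :
      Step M M' → Step (.caseOf M i N) (.caseOf M' i N)
  | case_right (M : Tm Loc Ch) (i : Ch) (N N' : Tm Loc Ch) :
      Step N N' → Step (.caseOf M i N) (.caseOf M i N')
  | loop_body (M M' : Tm Loc Ch) (i : Ch) :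
      Step M M' → Step (.loop M i) (.loop M' i)

variable [DecidableEq Loc]

/-- A memory: a family of stacks of terms indexed by the locations
(stacks are lists with the head as top). -/
def Mem (Loc Ch : Type) := Loc → List (Tm Loc Ch)

/-- `S.push a N` pushes `N` onto the stack at location `a`. -/
def Mem.push (S : Mem Loc Ch) (a : Loc) (N : Tm Loc Ch) : Mem Loc Ch :=
  Function.update S a (N :: S a)

/-- The empty memory. -/
def Mem.empty : Mem Loc Ch := fun _ => []

/-- Big-step evaluation `(S, M) ⇓ (T, i)`. -/
inductive Eval : Mem Loc Ch → Tm Loc Ch → Mem Loc Ch → Ch → Prop where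
  | choice (S : Mem Loc Ch) (i : Ch) : Eval S (.choice i) S i
  | push (S : Mem Loc Ch) (N : Tm Loc Ch) (a : Loc) (M : Tm Loc Ch) (T : Mem Loc Ch) (i : Ch) :
      Eval (S.push a N) M T i → Eval S (.push N a M) T i
  | pop (S : Mem Loc Ch) (a : Loc) (N M : Tm Loc Ch) (T : Mem Loc Ch) (i : Ch) :
      Eval S (M.subst 0 N) T i → Eval (S.push a N) (.pop a M) T i
  | case_eq (R S T : Mem Loc Ch) (M N : Tm Loc Ch) (i j : Ch) :
      Eval R M S i → Eval S N T j → Eval R (.caseOf M i N) T j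
  | case_ne (R T : Mem Loc Ch) (M N : Tm Loc Ch) (i j : Ch) (h : i ≠ j) :
      Eval R M T i → Eval R (.caseOf M j N) T i
  | loop_eq (R S T : Mem Loc Ch) (M : Tm Loc Ch) (i j : Ch) :
      Eval R M S i → Eval S (.loop M i) T j → Eval R (.loop M i) T j
  | loop_ne (R T : Mem Loc Ch) (M : Tm Loc Ch) (i j : Ch) (h : i ≠ j) :
      Eval R M T i → Eval R (.loop M j) T i

/-- Reduction extended to memories: reduce one term in one stack. -/
inductive MemStep : Mem Loc Ch → Mem Loc Ch → Prop where
  | head (S : Mem Loc Ch) (a : Loc) (M N : Tm Loc Ch) :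
      Step M N → MemStep (S.push a M) (S.push a N)
  | tail (S T : Mem Loc Ch) (a : Loc) (M : Tm Loc Ch) :
      MemStep S T → MemStep (S.push a M) (T.push a M)

set_option linter.unusedSectionVars false
set_option linter.unreachableTactic false
set_option linter.unusedTactic false

namespace Tm

theorem lift_lift (M : Tm Loc Ch) : ∀ d e, d ≤ e → (M.lift d).lift (e+1) = (M.lift e).lift d := by
  induction M with
  | var n =>
      intro d e h
      simp only [lift]
      split_ifs <;> simp only [lift] <;> split_ifs <;>
        first | rfl | (exfalso; omega) | (simp only [Tm.var.injEq]; omega)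
  | push N a M ihN ihM => intro d e h; simp only [lift, ihN d e h, ihM d e h]
  | pop a M ih => intro d e h; simp only [lift, ih (d+1) (e+1) (by omega)]
  | choice i => intro d e h; simp only [lift]
  | caseOf M i N ihM ihN => intro d e h; simp only [lift, ihM d e h, ihN d e h]
  | loop M i ih => intro d e h; simp only [lift, ih d e h]

theorem subst_lift (M : Tm Loc Ch) : ∀ k N, (M.lift k).subst k N = M := by
  induction M with
  | var n =>
      intro k N
      simp only [lift]
      split_ifs <;> simp only [subst] <;> split_ifs <;>
        first | rfl | (exfalso; omega) | (simp only [Tm.var.injEq]; omega)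
  | push P a M ihP ihM => intro k N; simp only [lift, subst, ihP, ihM]
  | pop a M ih => intro k N; simp only [lift, subst, ih]
  | choice i => intro k N; simp only [lift, subst]
  | caseOf M i N ihM ihN => intro k N'; simp only [lift, subst, ihM, ihN]
  | loop M i ih => intro k N; simp only [lift, subst, ih]

theorem lift_subst_le (M : Tm Loc Ch) :
    ∀ k d (N : Tm Loc Ch), k ≤ d → (M.subst k N).lift d = (M.lift (d+1)).subst k (N.lift d) := by
  induction M with
  | var n =>
      intro k d N h
      simp only [subst, lift]
      split_ifs <;> simp only [subst, lift] <;> split_ifs <;>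
        first | rfl | (exfalso; omega) | (simp only [Tm.var.injEq]; omega)
  | push P a M ihP ihM => intro k d N h; simp only [subst, lift, ihP k d N h, ihM k d N h]
  | pop a M ih =>
      intro k d N h
      simp only [subst, lift, ih (k+1) (d+1) (N.lift 0) (by omega), lift_lift N 0 d (by omega)]
  | choice i => intro k d N h; simp only [subst, lift]
  | caseOf M i N ihM ihN => intro k d N' h; simp only [subst, lift, ihM k d N' h, ihN k d N' h]
  | loop M i ih => intro k d N h; simp only [subst, lift, ih k d N h]

theorem lift_subst_ge (M : Tm Loc Ch) :
    ∀ k d (N : Tm Loc Ch), d ≤ k → (M.subst k N).lift d = (M.lift d).subst (k+1) (N.lift d) := by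
  induction M with
  | var n =>
      intro k d N h
      simp only [subst, lift]
      split_ifs <;> simp only [subst, lift] <;> split_ifs <;>
        first | rfl | (exfalso; omega) | (simp only [Tm.var.injEq]; omega)
  | push P a M ihP ihM => intro k d N h; simp only [subst, lift, ihP k d N h, ihM k d N h]
  | pop a M ih =>
      intro k d N h
      simp only [subst, lift, ih (k+1) (d+1) (N.lift 0) (by omega), lift_lift N 0 d (by omega)]
  | choice i => intro k d N h; simp only [subst, lift]
  | caseOf M i N ihM ihN => intro k d N' h; simp only [subst, lift, ihM k d N' h, ihN k d N' h]
  | loop M i ih => intro k d N h; simp only [subst, lift, ih k d N h]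

theorem subst_subst (M : Tm Loc Ch) :
    ∀ j k (N P : Tm Loc Ch), j ≤ k →
      (M.subst j N).subst k P = (M.subst (k+1) (P.lift j)).subst j (N.subst k P) := by
  induction M with
  | var n =>
      intro j k N P h
      simp only [subst]
      split_ifs <;> (try simp only [subst]) <;> (try split_ifs) <;>
        first
          | rfl
          | (exfalso; omega)
          | (simp only [Tm.var.injEq]; omega)
          | exact (subst_lift P j (N.subst k P)).symm
  | push Q a M ihQ ihM => intro j k N P h; simp only [subst, ihQ j k N P h, ihM j k N P h]
  | pop a M ih =>
      intro j k N P h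
      simp only [subst, ih (j+1) (k+1) (N.lift 0) (P.lift 0) (by omega),
        lift_lift P 0 j (by omega), lift_subst_ge N k 0 P (by omega)]
  | choice i => intro j k N P h; simp only [subst]
  | caseOf M i Q ihM ihQ => intro j k N P h; simp only [subst, ihM j k N P h, ihQ j k N P h]
  | loop M i ih => intro j k N P h; simp only [subst, ih j k N P h]

end Tm

theorem step_lift {M M' : Tm Loc Ch} (h : Step M M') : ∀ d, Step (M.lift d) (M'.lift d) := by
  induction h with
  | beta N a M =>
      intro d
      simp only [Tm.lift, Tm.lift_subst_le M 0 d N (by omega)]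
      exact Step.beta _ _ _
  | passage N a b M hab =>
      intro d
      simp only [Tm.lift, Tm.lift_lift N 0 d (by omega)]
      exact Step.passage _ _ _ _ hab
  | select i M => intro d; simp only [Tm.lift]; exact Step.select _ _
  | reject i j M hij => intro d; simp only [Tm.lift]; exact Step.reject _ _ _ hij
  | prefixPop a N i M =>
      intro d
      simp only [Tm.lift, Tm.lift_lift M 0 d (by omega)]
      exact Step.prefixPop _ _ _ _
  | prefixPush P a N i M => intro d; simp only [Tm.lift]; exact Step.prefixPush _ _ _ _ _
  | assoc P i N M => intro d; simp only [Tm.lift]; exact Step.assoc _ _ _ _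
  | unroll M i => intro d; simp only [Tm.lift]; exact Step.unroll _ _
  | push_left N N' a M _ ih => intro d; exact Step.push_left _ _ _ _ (ih d)
  | push_right N a M M' _ ih => intro d; exact Step.push_right _ _ _ _ (ih d)
  | pop_body a M M' _ ih => intro d; exact Step.pop_body _ _ _ (ih (d+1))
  | case_left M M' i N _ ih => intro d; exact Step.case_left _ _ _ _ (ih d)
  | case_right M i N N' _ ih => intro d; exact Step.case_right _ _ _ _ (ih d)
  | loop_body M M' i _ ih => intro d; exact Step.loop_body _ _ _ (ih d)

theorem step_subst {M M' : Tm Loc Ch} (h : Step M M') :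
    ∀ k (P : Tm Loc Ch), Step (M.subst k P) (M'.subst k P) := by
  induction h with
  | beta N a M =>
      intro k P
      simp only [Tm.subst, Tm.subst_subst M 0 k N P (by omega)]
      exact Step.beta _ _ _
  | passage N a b M hab =>
      intro k P
      simp only [Tm.subst]
      rw [← Tm.lift_subst_ge N k 0 P (by omega)]
      exact Step.passage _ _ _ _ hab
  | select i M => intro k P; simp only [Tm.subst]; exact Step.select _ _
  | reject i j M hij => intro k P; simp only [Tm.subst]; exact Step.reject _ _ _ hij
  | prefixPop a N i M =>
      intro k P
      simp only [Tm.subst]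
      rw [← Tm.lift_subst_ge M k 0 P (by omega)]
      exact Step.prefixPop _ _ _ _
  | prefixPush Q a N i M => intro k P; simp only [Tm.subst]; exact Step.prefixPush _ _ _ _ _
  | assoc Q i N M => intro k P; simp only [Tm.subst]; exact Step.assoc _ _ _ _
  | unroll M i => intro k P; simp only [Tm.subst]; exact Step.unroll _ _
  | push_left N N' a M _ ih => intro k P; exact Step.push_left _ _ _ _ (ih k P)
  | push_right N a M M' _ ih => intro k P; exact Step.push_right _ _ _ _ (ih k P)
  | pop_body a M M' _ ih => intro k P; exact Step.pop_body _ _ _ (ih (k+1) (P.lift 0))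
  | case_left M M' i N _ ih => intro k P; exact Step.case_left _ _ _ _ (ih k P)
  | case_right M i N N' _ ih => intro k P; exact Step.case_right _ _ _ _ (ih k P)
  | loop_body M M' i _ ih => intro k P; exact Step.loop_body _ _ _ (ih k P)

theorem subst_step_arg (M : Tm Loc Ch) :
    ∀ k {N N' : Tm Loc Ch}, Step N N' →
      Relation.ReflTransGen Step (M.subst k N) (M.subst k N') := by
  induction M with
  | var n =>
      intro k N N' h
      simp only [Tm.subst]
      split_ifs
      · exact Relation.ReflTransGen.single h
      · exact Relation.ReflTransGen.refl
      · exact Relation.ReflTransGen.refl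
  | push P a M ihP ihM =>
      intro k N N' h
      simp only [Tm.subst]
      exact Relation.ReflTransGen.trans
        ((ihP k h).lift (fun X => Tm.push X a (M.subst k N)) (fun _ _ => Step.push_left _ _ _ _))
        ((ihM k h).lift (fun X => Tm.push (P.subst k N') a X) (fun _ _ => Step.push_right _ _ _ _))
  | pop a M ih =>
      intro k N N' h
      simp only [Tm.subst]
      exact (ih (k+1) (step_lift h 0)).lift (fun X => Tm.pop a X) (fun _ _ => Step.pop_body _ _ _)
  | choice i => intro k N N' h; exact Relation.ReflTransGen.refl
  | caseOf M i Q ihM ihQ =>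
      intro k N N' h
      simp only [Tm.subst]
      exact Relation.ReflTransGen.trans
        ((ihM k h).lift (fun X => Tm.caseOf X i (Q.subst k N)) (fun _ _ => Step.case_left _ _ _ _))
        ((ihQ k h).lift (fun X => Tm.caseOf (M.subst k N') i X) (fun _ _ => Step.case_right _ _ _ _))
  | loop M i ih =>
      intro k N N' h
      exact (ih k h).lift (fun X => Tm.loop X i) (fun _ _ => Step.loop_body _ _ _)

theorem Mem.push_def (S : Mem Loc Ch) (a : Loc) (N : Tm Loc Ch) :
    S.push a N = Function.update S a (N :: S a) := rfl

theorem Mem.push_apply_same (S : Mem Loc Ch) (a : Loc) (N : Tm Loc Ch) :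
    (S.push a N) a = N :: S a := by simp [Mem.push_def]; exact Function.update_self _ _ _

theorem Mem.push_apply_ne (S : Mem Loc Ch) (a : Loc) (N : Tm Loc Ch) {c : Loc} (h : c ≠ a) :
    (S.push a N) c = S c := by simp [Mem.push_def, Function.update_of_ne h]; exact Function.update_of_ne h _ _

theorem Mem.push_inj {S S' : Mem Loc Ch} {a : Loc} {N N' : Tm Loc Ch}
    (h : S.push a N = S'.push a N') : S = S' ∧ N = N' := by
  have ha := congrFun h a
  rw [Mem.push_apply_same, Mem.push_apply_same] at ha
  refine ⟨funext fun c => ?_, (List.cons.injEq _ _ _ _ ▸ ha).1⟩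
  by_cases hc : c = a
  · subst hc; exact (List.cons.injEq _ _ _ _ ▸ ha).2
  · have := congrFun h c
    rwa [Mem.push_apply_ne _ _ _ hc, Mem.push_apply_ne _ _ _ hc] at this

theorem Mem.eq_push_decomp {S : Mem Loc Ch} {a : Loc} {P : Tm Loc Ch} {L : List (Tm Loc Ch)}
    (h : S a = P :: L) : S = Mem.push (Function.update S a L) a P := by
  funext c
  by_cases hc : c = a
  · subst hc; erw [Mem.push_apply_same, Function.update_self, h]
  · erw [Mem.push_apply_ne _ _ _ hc, Function.update_of_ne hc]

/-- One-step reduction inside a list of terms. -/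
inductive ListStep : List (Tm Loc Ch) → List (Tm Loc Ch) → Prop where
  | head {M N : Tm Loc Ch} {L : List (Tm Loc Ch)} : Step M N → ListStep (M :: L) (N :: L)
  | tail {M : Tm Loc Ch} {L L' : List (Tm Loc Ch)} : ListStep L L' → ListStep (M :: L) (M :: L')

theorem memStep_char {Q Q' : Mem Loc Ch} (h : MemStep Q Q') :
    ∃ b, ListStep (Q b) (Q' b) ∧ ∀ c, c ≠ b → Q c = Q' c := by
  induction h with
  | head S a M N hMN =>
      refine ⟨a, ?_, fun c hc => ?_⟩
      · rw [Mem.push_apply_same, Mem.push_apply_same]; exact ListStep.head hMN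
      · rw [Mem.push_apply_ne _ _ _ hc, Mem.push_apply_ne _ _ _ hc]
  | tail S T a M _ ih =>
      obtain ⟨b, hls, hag⟩ := ih
      by_cases hb : b = a
      · subst hb
        refine ⟨b, ?_, fun c hc => ?_⟩
        · rw [Mem.push_apply_same, Mem.push_apply_same]; exact ListStep.tail hls
        · rw [Mem.push_apply_ne _ _ _ hc, Mem.push_apply_ne _ _ _ hc, hag c hc]
      · refine ⟨b, ?_, fun c hc => ?_⟩
        · rw [Mem.push_apply_ne _ _ _ hb, Mem.push_apply_ne _ _ _ hb]; exact hls
        · by_cases hca : c = a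
          · subst hca; rw [Mem.push_apply_same, Mem.push_apply_same, hag c hc]
          · rw [Mem.push_apply_ne _ _ _ hca, Mem.push_apply_ne _ _ _ hca, hag c hc]

theorem listStep_update {L L' : List (Tm Loc Ch)} (h : ListStep L L') :
    ∀ (Q : Mem Loc Ch) (b : Loc), MemStep (Function.update Q b L) (Function.update Q b L') := by
  induction h with
  | @head M N K hMN =>
      intro Q b
      have e1 : Function.update Q b (M :: K) = Mem.push (Function.update Q b K) b M := by
        erw [Mem.push_def, Function.update_self, Function.update_idem]
      have e2 : Function.update Q b (N :: K) = Mem.push (Function.update Q b K) b N := by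
        erw [Mem.push_def, Function.update_self, Function.update_idem]
      rw [e1, e2]
      exact MemStep.head _ _ _ _ hMN
  | @tail M K K' _ ih =>
      intro Q b
      have e1 : Function.update Q b (M :: K) = Mem.push (Function.update Q b K) b M := by
        erw [Mem.push_def, Function.update_self, Function.update_idem]
      have e2 : Function.update Q b (M :: K') = Mem.push (Function.update Q b K') b M := by
        erw [Mem.push_def, Function.update_self, Function.update_idem]
      rw [e1, e2]
      exact MemStep.tail _ _ _ _ (ih Q b)

theorem memStep_push_inv {S : Mem Loc Ch} {a : Loc} {N : Tm Loc Ch} {R' : Mem Loc Ch}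
    (h : MemStep (S.push a N) R') :
    (∃ N', Step N N' ∧ R' = S.push a N') ∨ (∃ S', MemStep S S' ∧ R' = S'.push a N) := by
  obtain ⟨b, hls, hag⟩ := memStep_char h
  by_cases hb : b = a
  · subst hb
    rw [Mem.push_apply_same] at hls
    generalize hR : R' b = LR at hls
    cases hls with
    | @head _ N' _ hNN' =>
        left
        refine ⟨N', hNN', funext fun c => ?_⟩
        by_cases hc : c = b
        · subst hc; rw [hR, Mem.push_apply_same]
        · rw [← hag c hc, Mem.push_apply_ne _ _ _ hc, Mem.push_apply_ne _ _ _ hc]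
    | @tail _ _ K hK =>
        right
        refine ⟨Function.update S b K, ?_, funext fun c => ?_⟩
        · have := listStep_update hK S b
          erw [Function.update_eq_self] at this; exact this
        · by_cases hc : c = b
          · subst hc; erw [hR, Mem.push_apply_same, Function.update_self]
          · erw [← hag c hc, Mem.push_apply_ne _ _ _ hc, Mem.push_apply_ne _ _ _ hc,
              Function.update_of_ne hc]
  · right
    rw [Mem.push_apply_ne _ _ _ hb] at hls
    refine ⟨Function.update S b (R' b), ?_, funext fun c => ?_⟩
    · have := listStep_update hls S b
      erw [Function.update_eq_self] at this; exact this
    · by_cases hc : c = a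
      · subst hc
        erw [← hag c (fun e => hb e.symm), Mem.push_apply_same, Mem.push_apply_same,
          Function.update_of_ne (fun e => hb e.symm)]
      · by_cases hcb : c = b
        · subst hcb; erw [Mem.push_apply_ne _ _ _ hc, Function.update_self]
        · erw [← hag c hcb, Mem.push_apply_ne _ _ _ hc, Mem.push_apply_ne _ _ _ hc,
            Function.update_of_ne hcb]

/-- Big-step evaluation with a size bound on the derivation. -/
inductive EvalN : ℕ → Mem Loc Ch → Tm Loc Ch → Mem Loc Ch → Ch → Prop where
  | choice (n : ℕ) (S : Mem Loc Ch) (i : Ch) : EvalN n S (.choice i) S i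
  | push {n : ℕ} {S : Mem Loc Ch} {N : Tm Loc Ch} {a : Loc} {M : Tm Loc Ch} {T : Mem Loc Ch}
      {i : Ch} : EvalN n (S.push a N) M T i → EvalN (n+1) S (.push N a M) T i
  | pop {n : ℕ} {S : Mem Loc Ch} {a : Loc} {N M : Tm Loc Ch} {T : Mem Loc Ch} {i : Ch} :
      EvalN n S (M.subst 0 N) T i → EvalN (n+1) (S.push a N) (.pop a M) T i
  | case_eq {n1 n2 : ℕ} {R S T : Mem Loc Ch} {M N : Tm Loc Ch} {i j : Ch} :
      EvalN n1 R M S i → EvalN n2 S N T j → EvalN (n1+n2+1) R (.caseOf M i N) T j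
  | case_ne {n : ℕ} {R T : Mem Loc Ch} {M N : Tm Loc Ch} {i j : Ch} (h : i ≠ j) :
      EvalN n R M T i → EvalN (n+1) R (.caseOf M j N) T i
  | loop_eq {n1 n2 : ℕ} {R S T : Mem Loc Ch} {M : Tm Loc Ch} {i j : Ch} :
      EvalN n1 R M S i → EvalN n2 S (.loop M i) T j → EvalN (n1+n2+1) R (.loop M i) T j
  | loop_ne {n : ℕ} {R T : Mem Loc Ch} {M : Tm Loc Ch} {i j : Ch} (h : i ≠ j) :
      EvalN n R M T i → EvalN (n+1) R (.loop M j) T i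

theorem EvalN.succ {n : ℕ} {R : Mem Loc Ch} {M : Tm Loc Ch} {T : Mem Loc Ch} {i : Ch}
    (h : EvalN n R M T i) : EvalN (n+1) R M T i := by
  induction h with
  | choice n S i => exact .choice _ _ _
  | push _ ih => exact .push ih
  | pop _ ih => exact .pop ih
  | @case_eq n1 n2 _ _ _ _ _ _ _ h1 h2 ih1 _ =>
      rw [show n1+n2+1+1 = (n1+1)+n2+1 from by omega]; exact .case_eq ih1 h2
  | case_ne h _ ih => exact .case_ne h ih
  | @loop_eq n1 n2 _ _ _ _ _ _ h1 h2 ih1 _ =>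
      rw [show n1+n2+1+1 = (n1+1)+n2+1 from by omega]; exact .loop_eq ih1 h2
  | loop_ne h _ ih => exact .loop_ne h ih

theorem EvalN.mono {n m : ℕ} {R : Mem Loc Ch} {M : Tm Loc Ch} {T : Mem Loc Ch} {i : Ch}
    (h : EvalN n R M T i) (hnm : n ≤ m) : EvalN m R M T i := by
  induction m with
  | zero => exact (show n = 0 from by omega) ▸ h
  | succ m ih =>
      rcases Nat.lt_or_ge n (m+1) with hlt | hge
      · exact (ih (by omega)).succ
      · exact (show n = m+1 from by omega) ▸ h

theorem evalN_of_eval {R : Mem Loc Ch} {M : Tm Loc Ch} {T : Mem Loc Ch} {i : Ch}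
    (h : Eval R M T i) : ∃ n, EvalN n R M T i := by
  induction h with
  | choice S i => exact ⟨0, .choice _ _ _⟩
  | push S N a M T i _ ih => obtain ⟨n, hn⟩ := ih; exact ⟨n+1, .push hn⟩
  | pop S a N M T i _ ih => obtain ⟨n, hn⟩ := ih; exact ⟨n+1, .pop hn⟩
  | case_eq R S T M N i j _ _ ih1 ih2 =>
      obtain ⟨n1, h1⟩ := ih1; obtain ⟨n2, h2⟩ := ih2; exact ⟨n1+n2+1, .case_eq h1 h2⟩
  | case_ne R T M N i j h _ ih => obtain ⟨n, hn⟩ := ih; exact ⟨n+1, .case_ne h hn⟩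
  | loop_eq R S T M i j _ _ ih1 ih2 =>
      obtain ⟨n1, h1⟩ := ih1; obtain ⟨n2, h2⟩ := ih2; exact ⟨n1+n2+1, .loop_eq h1 h2⟩
  | loop_ne R T M i j h _ ih => obtain ⟨n, hn⟩ := ih; exact ⟨n+1, .loop_ne h hn⟩

theorem eval_of_evalN {n : ℕ} {R : Mem Loc Ch} {M : Tm Loc Ch} {T : Mem Loc Ch} {i : Ch}
    (h : EvalN n R M T i) : Eval R M T i := by
  induction h with
  | choice n S i => exact .choice _ _
  | push _ ih => exact .push _ _ _ _ _ _ ih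
  | pop _ ih => exact .pop _ _ _ _ _ _ ih
  | case_eq _ _ ih1 ih2 => exact .case_eq _ _ _ _ _ _ _ ih1 ih2
  | case_ne h _ ih => exact .case_ne _ _ _ _ _ _ h ih
  | loop_eq _ _ ih1 ih2 => exact .loop_eq _ _ _ _ _ _ ih1 ih2
  | loop_ne h _ ih => exact .loop_ne _ _ _ _ _ h ih

/-- From single-term-step preservation at size `n`, multi-step preservation. -/
theorem multiA_of {n : ℕ}
    (hA : ∀ (R : Mem Loc Ch) (M : Tm Loc Ch) (T : Mem Loc Ch) (i : Ch) (M' : Tm Loc Ch),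
      EvalN n R M T i → Step M M' → ∃ U, Relation.ReflTransGen MemStep T U ∧ EvalN n R M' U i)
    {M M' : Tm Loc Ch} (hred : Relation.ReflTransGen Step M M') :
    ∀ (R T : Mem Loc Ch) (i : Ch), EvalN n R M T i →
      ∃ U, Relation.ReflTransGen MemStep T U ∧ EvalN n R M' U i := by
  induction hred using Relation.ReflTransGen.head_induction_on with
  | refl => exact fun R T i h => ⟨T, .refl, h⟩
  | head hstep _ ih =>
      intro R T i h
      obtain ⟨T1, hT1, h1⟩ := hA _ _ _ _ _ h hstep
      obtain ⟨U, hU, h2⟩ := ih _ _ _ h1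
      exact ⟨U, hT1.trans hU, h2⟩

/-- From single-memory-step preservation at size `n`, multi-step preservation. -/
theorem multiB_of {n : ℕ}
    (hB : ∀ (R : Mem Loc Ch) (M : Tm Loc Ch) (T : Mem Loc Ch) (i : Ch) (R' : Mem Loc Ch),
      EvalN n R M T i → MemStep R R' → ∃ U, Relation.ReflTransGen MemStep T U ∧ EvalN n R' M U i)
    {R R' : Mem Loc Ch} (hmem : Relation.ReflTransGen MemStep R R') :
    ∀ (M : Tm Loc Ch) (T : Mem Loc Ch) (i : Ch), EvalN n R M T i →
      ∃ U, Relation.ReflTransGen MemStep T U ∧ EvalN n R' M U i := by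
  induction hmem using Relation.ReflTransGen.head_induction_on with
  | refl => exact fun M T i h => ⟨T, .refl, h⟩
  | head hstep _ ih =>
      intro M T i h
      obtain ⟨T1, hT1, h1⟩ := hB _ _ _ _ _ h hstep
      obtain ⟨U, hU, h2⟩ := ih _ _ _ h1
      exact ⟨U, hT1.trans hU, h2⟩

theorem evalN_pop_inv {n : ℕ} {Q : Mem Loc Ch} {a : Loc} {M1 : Tm Loc Ch} {T : Mem Loc Ch}
    {i : Ch} (h : EvalN n Q (.pop a M1) T i) :
    ∃ m P L, n = m + 1 ∧ Q a = P :: L ∧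
      EvalN m (Function.update Q a L) (M1.subst 0 P) T i := by
  cases h with
  | pop hsub =>
      rename_i m S P
      refine ⟨m, P, S a, rfl, Mem.push_apply_same _ _ _, ?_⟩
      have e : Function.update (Mem.push S a P) a (S a) = S := by
        erw [Mem.push_def, Function.update_idem, Function.update_eq_self]
      rw [e]
      exact hsub

theorem evalN_pop_intro {n : ℕ} {Q : Mem Loc Ch} {a : Loc} {M1 P : Tm Loc Ch}
    {L : List (Tm Loc Ch)} {T : Mem Loc Ch} {i : Ch} (hQ : Q a = P :: L)
    (h : EvalN n (Function.update Q a L) (M1.subst 0 P) T i) :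
    EvalN (n+1) Q (.pop a M1) T i := by
  rw [show Q = Mem.push (Function.update Q a L) a P from Mem.eq_push_decomp hQ]
  exact .pop h

theorem key (n : ℕ) :
    (∀ (R : Mem Loc Ch) (M : Tm Loc Ch) (T : Mem Loc Ch) (i : Ch) (M' : Tm Loc Ch),
      EvalN n R M T i → Step M M' →
        ∃ U, Relation.ReflTransGen MemStep T U ∧ EvalN n R M' U i) ∧
    (∀ (R : Mem Loc Ch) (M : Tm Loc Ch) (T : Mem Loc Ch) (i : Ch) (R' : Mem Loc Ch),
      EvalN n R M T i → MemStep R R' →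
        ∃ U, Relation.ReflTransGen MemStep T U ∧ EvalN n R' M U i) := by
  induction n using Nat.strong_induction_on with
  | _ n IH =>
  constructor
  · -- Part A: single term step
    intro R M T i M' hev hstep
    cases hev with
    | choice => cases hstep
    | push hsub =>
      rename_i m N a M0
      cases hstep with
      | beta =>
          rename_i M1
          obtain ⟨m', P, L, hm, hQ, h'⟩ := evalN_pop_inv hsub
          rw [Mem.push_apply_same] at hQ
          injection hQ with hP hL
          subst hP; subst hL
          have e : Function.update (Mem.push R a N) a (R a) = R := by
            erw [Mem.push_def, Function.update_idem, Function.update_eq_self]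
          rw [e] at h'
          exact ⟨T, .refl, h'.mono (by omega)⟩
      | passage =>
          rename_i a' M1 hab
          obtain ⟨m', P, L, hm, hQ, h'⟩ := evalN_pop_inv hsub
          rw [Mem.push_apply_ne _ _ _ hab] at hQ
          have hfin : EvalN (m'+1+1) R (.pop a' (.push (N.lift 0) a M1)) T i := by
            apply evalN_pop_intro hQ
            simp only [Tm.subst, Tm.subst_lift]
            apply EvalN.push
            have e : Mem.push (Function.update R a' L) a N
                = Function.update (Mem.push R a N) a' L := by
              funext c
              by_cases hc : c = a
              · subst hc
                erw [Mem.push_apply_same, Function.update_of_ne (fun e => hab e.symm),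
                  Function.update_of_ne (fun e => hab e.symm), Mem.push_apply_same]
              · erw [Mem.push_apply_ne _ _ _ hc]
                by_cases hca : c = a'
                · subst hca
                  erw [Function.update_self, Function.update_self]
                · erw [Function.update_of_ne hca, Function.update_of_ne hca,
                    Mem.push_apply_ne _ _ _ hc]
            rw [e]
            exact h'
          exact ⟨T, .refl, hfin.mono (by omega)⟩
      | push_left =>
          rename_i N' hN
          obtain ⟨U, hU, h'⟩ := (IH m (by omega)).2 _ _ _ _ _ hsub (MemStep.head R a N N' hN)
          exact ⟨U, hU, .push h'⟩
      | push_right =>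
          rename_i M1 hM
          obtain ⟨U, hU, h'⟩ := (IH m (by omega)).1 _ _ _ _ _ hsub hM
          exact ⟨U, hU, .push h'⟩
    | pop hsub =>
      rename_i m S a N M0
      cases hstep with
      | pop_body =>
          rename_i M1 hM
          obtain ⟨U, hU, h'⟩ := (IH m (by omega)).1 _ _ _ _ _ hsub (step_subst hM 0 N)
          exact ⟨U, hU, .pop h'⟩
    | case_eq h1 h2 =>
      rename_i n1 n2 S0 M0 N0 i0
      cases hstep with
      | select =>
          cases h1
          exact ⟨T, .refl, h2.mono (by omega)⟩
      | reject =>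
          rename_i k hk
          cases h1
          exact absurd rfl hk
      | prefixPop =>
          rename_i a1 P
          obtain ⟨m', W, L, hm, hQ, h1'⟩ := evalN_pop_inv h1
          have hfin := evalN_pop_intro (n := m' + n2 + 1) (M1 := .caseOf P i0 (N0.lift 0)) (T := T) (i := i) hQ ?_
          · exact ⟨T, .refl, hfin.mono (by omega)⟩
          · simp only [Tm.subst, Tm.subst_lift]
            exact EvalN.case_eq h1' h2
      | prefixPush =>
          cases h1 with
          | push h1' =>
              exact ⟨T, .refl, (EvalN.push (EvalN.case_eq h1' h2)).mono (by omega)⟩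
      | assoc =>
          cases h1 with
          | case_eq hP hQ =>
              exact ⟨T, .refl, (EvalN.case_eq hP (EvalN.case_eq hQ h2)).mono (by omega)⟩
          | case_ne h' hP => exact absurd rfl h'
      | case_left =>
          rename_i M1 hM
          obtain ⟨S1, hS1, h1'⟩ := (IH n1 (by omega)).1 _ _ _ _ _ h1 hM
          obtain ⟨U, hU, h2'⟩ :=
            multiB_of (fun R M T i R' => (IH n2 (by omega)).2 R M T i R') hS1 _ _ _ h2
          exact ⟨U, hU, EvalN.case_eq h1' h2'⟩
      | case_right =>
          rename_i N1 hN
          obtain ⟨U, hU, h2'⟩ := (IH n2 (by omega)).1 _ _ _ _ _ h2 hN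
          exact ⟨U, hU, EvalN.case_eq h1 h2'⟩
    | case_ne h h1 =>
      rename_i m M0 N0 j0
      cases hstep with
      | select =>
          cases h1
          exact absurd rfl h
      | reject =>
          rename_i k hk
          cases h1
          exact ⟨R, .refl, EvalN.choice _ _ _⟩
      | prefixPop =>
          rename_i a1 P
          obtain ⟨m', W, L, hm, hQ, h1'⟩ := evalN_pop_inv h1
          have hfin := evalN_pop_intro (n := m' + 1) (M1 := .caseOf P j0 (N0.lift 0)) (T := T) (i := i) hQ ?_
          · exact ⟨T, .refl, hfin.mono (by omega)⟩
          · simp only [Tm.subst, Tm.subst_lift]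
            exact EvalN.case_ne h h1'
      | prefixPush =>
          cases h1 with
          | push h1' =>
              exact ⟨T, .refl, (EvalN.push (EvalN.case_ne h h1')).mono (by omega)⟩
      | assoc =>
          cases h1 with
          | case_eq hP hQ =>
              exact ⟨T, .refl, (EvalN.case_eq hP (EvalN.case_ne h hQ)).mono (by omega)⟩
          | case_ne h' hP =>
              exact ⟨T, .refl, (EvalN.case_ne h' hP).mono (by omega)⟩
      | case_left =>
          rename_i M1 hM
          obtain ⟨U, hU, h1'⟩ := (IH m (by omega)).1 _ _ _ _ _ h1 hM
          exact ⟨U, hU, EvalN.case_ne h h1'⟩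
      | case_right =>
          rename_i N1 hN
          exact ⟨T, .refl, EvalN.case_ne h h1⟩
    | loop_eq h1 h2 =>
      rename_i n1 n2 S0 M0 i0
      cases hstep with
      | unroll => exact ⟨T, .refl, EvalN.case_eq h1 h2⟩
      | loop_body =>
          rename_i M1 hM
          obtain ⟨S1, hS1, h1'⟩ := (IH n1 (by omega)).1 _ _ _ _ _ h1 hM
          obtain ⟨T1, hT1, h2'⟩ := (IH n2 (by omega)).1 _ _ _ _ _ h2 (Step.loop_body _ _ _ hM)
          obtain ⟨U, hU, h2''⟩ :=
            multiB_of (fun R M T i R' => (IH n2 (by omega)).2 R M T i R') hS1 _ _ _ h2'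
          exact ⟨U, hT1.trans hU, EvalN.loop_eq h1' h2''⟩
    | loop_ne h h1 =>
      rename_i m M0 j0
      cases hstep with
      | unroll => exact ⟨T, .refl, EvalN.case_ne h h1⟩
      | loop_body =>
          rename_i M1 hM
          obtain ⟨U, hU, h1'⟩ := (IH m (by omega)).1 _ _ _ _ _ h1 hM
          exact ⟨U, hU, EvalN.loop_ne h h1'⟩
  · -- Part B: single memory step
    intro R M T i R' hev hmem
    cases hev with
    | choice => exact ⟨R', .single hmem, .choice _ _ _⟩
    | push hsub =>
        rename_i m N a M0
        obtain ⟨U, hU, h'⟩ := (IH m (by omega)).2 _ _ _ _ _ hsub (MemStep.tail _ _ _ _ hmem)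
        exact ⟨U, hU, .push h'⟩
    | pop hsub =>
        rename_i m S a N M0
        rcases memStep_push_inv hmem with ⟨N', hNN', rfl⟩ | ⟨S', hSS', rfl⟩
        · obtain ⟨U, hU, h'⟩ := multiA_of (fun R M T i M' => (IH m (by omega)).1 R M T i M')
            (subst_step_arg M0 0 hNN') _ _ _ hsub
          exact ⟨U, hU, .pop h'⟩
        · obtain ⟨U, hU, h'⟩ := (IH m (by omega)).2 _ _ _ _ _ hsub hSS'
          exact ⟨U, hU, .pop h'⟩
    | case_eq h1 h2 =>
        rename_i n1 n2 S0 M0 N0 i0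
        obtain ⟨S1, hS1, h1'⟩ := (IH n1 (by omega)).2 _ _ _ _ _ h1 hmem
        obtain ⟨U, hU, h2'⟩ :=
          multiB_of (fun R M T i R' => (IH n2 (by omega)).2 R M T i R') hS1 _ _ _ h2
        exact ⟨U, hU, EvalN.case_eq h1' h2'⟩
    | case_ne h h1 =>
        rename_i m M0 N0 j0
        obtain ⟨U, hU, h1'⟩ := (IH m (by omega)).2 _ _ _ _ _ h1 hmem
        exact ⟨U, hU, EvalN.case_ne h h1'⟩
    | loop_eq h1 h2 =>
        rename_i n1 n2 S0 M0 i0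
        obtain ⟨S1, hS1, h1'⟩ := (IH n1 (by omega)).2 _ _ _ _ _ h1 hmem
        obtain ⟨U, hU, h2'⟩ :=
          multiB_of (fun R M T i R' => (IH n2 (by omega)).2 R M T i R') hS1 _ _ _ h2
        exact ⟨U, hU, EvalN.loop_eq h1' h2'⟩
    | loop_ne h h1 =>
        rename_i m M0 j0
        obtain ⟨U, hU, h1'⟩ := (IH m (by omega)).2 _ _ _ _ _ h1 hmem
        exact ⟨U, hU, EvalN.loop_ne h h1'⟩

/-- Evaluation commutes with reduction. -/
theorem eval_commutes_with_reduction (R S T : Mem Loc Ch) (M N : Tm Loc Ch) (i : Ch)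
    (hmem : Relation.ReflTransGen MemStep R S) (hred : Relation.ReflTransGen Step M N)
    (heval : Eval R M T i) :
    ∃ U : Mem Loc Ch, Relation.ReflTransGen MemStep T U ∧ Eval S N U i := by
  obtain ⟨n, hn⟩ := evalN_of_eval heval
  obtain ⟨T1, hT1, h1⟩ := multiA_of (key n).1 hred _ _ _ hn
  obtain ⟨U, hU, h2⟩ := multiB_of (key n).2 hmem _ _ _ h1
  exact ⟨U, hT1.trans hU, eval_of_evalN h2⟩
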